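/- Let S ∈ ℝ^{d×d} be skew-symmetric, S = U Λ U^H with U unitary and Λ = diag(λ₁,…,λ_d). For i < j define E = U (I_{ij} − I_{ji}) Uᵀ, where I_{ij} is the matrix with 1 in entry (i,j) and 0 elsewhere. Then λ E = [E, S] holds with λ = −(λ_i + λ_j). -/

import Mathlib

open Matrix

/-- For skew-symmetric `S = U Λ U^H` (`U` unitary, `Λ = diag(λ₁,…,λ_d)`)
and `i < j`, the matrix `E = U (I_{ij} − I_{ji}) Uᵀ` satisfies `λ E = [E, S]`
with `λ = −(λ_i + λ_j)`. -/
theorem stmt11 (d : ℕ) (S : Matrix (Fin d) (Fin d) ℝ) (hskew : Sᵀ = -S)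
    (U : Matrix (Fin d) (Fin d) ℂ) (hU : U ∈ Matrix.unitaryGroup (Fin d) ℂ)
    (lam : Fin d → ℂ)
    (hdiag : S.map (Complex.ofReal ·) = U * Matrix.diagonal lam * Uᴴ)
    (i j : Fin d) (hij : i < j) :
    let Sc := S.map (Complex.ofReal ·)
    let E := U * (Matrix.single i j (1 : ℂ) - Matrix.single j i 1) * Uᵀ
    (-(lam i + lam j)) • E = E * Sc - Sc * E := by
  intro Sc E
  set A : Matrix (Fin d) (Fin d) ℂ :=
    Matrix.single i j (1 : ℂ) - Matrix.single j i 1 with hA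
  have hUU : Uᴴ * U = 1 := hU.1
  have hUU' : U * Uᴴ = 1 := hU.2
  -- Sc is skew-symmetric
  have hSct : Scᵀ = -Sc := by
    show (S.map (Complex.ofReal ·))ᵀ = -(S.map (Complex.ofReal ·))
    rw [← Matrix.transpose_map, hskew]
    ext a b
    simp [Matrix.map_apply]
  -- Sc * U = U * Λ
  have hScU : Sc * U = U * Matrix.diagonal lam := by
    show S.map (Complex.ofReal ·) * U = _
    rw [hdiag, Matrix.mul_assoc, Matrix.mul_assoc, hUU, Matrix.mul_one]
  -- Uᵀ * Sc = -Λ * Uᵀ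
  have hUtSc : Uᵀ * Sc = -(Matrix.diagonal lam) * Uᵀ := by
    have h0 : Scᵀ = Uᴴᵀ * Matrix.diagonal lam * Uᵀ := by
      show (S.map (Complex.ofReal ·))ᵀ = _
      rw [hdiag, Matrix.transpose_mul, Matrix.transpose_mul, Matrix.diagonal_transpose,
        Matrix.mul_assoc]
    have h1 : Sc = -(Uᴴᵀ * Matrix.diagonal lam * Uᵀ) := by
      rw [← h0, hSct, neg_neg]
    rw [h1]
    have h2 : Uᵀ * Uᴴᵀ = 1 := by
      rw [← Matrix.transpose_mul, hUU, Matrix.transpose_one]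
    calc Uᵀ * -(Uᴴᵀ * Matrix.diagonal lam * Uᵀ)
        = -(Uᵀ * Uᴴᵀ * Matrix.diagonal lam * Uᵀ) := by
          simp only [Matrix.mul_neg, Matrix.mul_assoc]
      _ = -(Matrix.diagonal lam) * Uᵀ := by
          rw [h2, Matrix.one_mul, Matrix.neg_mul]
  -- key diagonal computation
  have hkey : A * Matrix.diagonal lam + Matrix.diagonal lam * A = (lam i + lam j) • A := by
    ext a b
    simp only [Matrix.add_apply, Matrix.mul_diagonal, Matrix.diagonal_mul,
      Matrix.smul_apply, hA, Matrix.sub_apply, Matrix.single,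
      Matrix.of_apply, smul_eq_mul]
    have hne : i ≠ j := hij.ne
    split_ifs <;> simp_all <;> ring
  -- now combine
  have hESc : E * Sc = -(U * (A * Matrix.diagonal lam) * Uᵀ) := by
    show U * A * Uᵀ * Sc = _
    rw [Matrix.mul_assoc (U * A), hUtSc]
    simp only [Matrix.neg_mul, Matrix.mul_neg, Matrix.mul_assoc]
  have hScE : Sc * E = U * (Matrix.diagonal lam * A) * Uᵀ := by
    show Sc * (U * A * Uᵀ) = _
    rw [← Matrix.mul_assoc, ← Matrix.mul_assoc, hScU]
    simp only [Matrix.mul_assoc]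
  rw [hESc, hScE]
  show (-(lam i + lam j)) • (U * A * Uᵀ) = _
  have : -(U * (A * Matrix.diagonal lam) * Uᵀ) - U * (Matrix.diagonal lam * A) * Uᵀ
      = -(U * (A * Matrix.diagonal lam + Matrix.diagonal lam * A) * Uᵀ) := by
    simp only [Matrix.mul_add, Matrix.add_mul, neg_add, sub_eq_add_neg]
  rw [this, hkey]
  simp only [Matrix.mul_smul, Matrix.smul_mul, neg_smul]
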